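/- Let A be a commutative ring, B a commutative A-algebra, v, u ∈ B, and m, n natural numbers. Say an element x of an A-algebra is k-integral over A if there is a monic polynomial of degree k over A annihilating x. If v is m-integral over A and u is n-integral over the subring A[v] of B, then u is (n·m)-integral over A. -/

import Mathlib

open Polynomial

theorem aux_charpoly {A B : Type*} [CommRing A] [CommRing B] [Algebra A B] [Nontrivial A]
    (u : B) {ι : Type*} [Fintype ι] [DecidableEq ι] (b : ι → B)
    (h1 : (1 : B) ∈ Submodule.span A (Set.range b))
    (hu : ∀ i, u * b i ∈ Submodule.span A (Set.range b)) :
    ∃ P : A[X], P.Monic ∧ P.natDegree = Fintype.card ι ∧ aeval u P = 0 := by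
  classical
  set N := Submodule.span A (Set.range b) with hN
  have hmul : ∀ x ∈ N, u * x ∈ N := by
    intro x hx
    refine Submodule.span_induction (fun y hy => ?_) (by simp) (fun y z _ _ hy hz => ?_)
      (fun a y _ hy => ?_) hx
    · obtain ⟨i, rfl⟩ := hy; exact hu i
    · rw [mul_add]; exact N.add_mem hy hz
    · rw [mul_smul_comm]; exact N.smul_mem a hy
  let f : Module.End A N := (LinearMap.mul A B u).restrict (p := N) (q := N) hmul
  have hf : ∀ x : N, ((f x : B)) = u * (x : B) := fun x => rfl
  let b' : ι → N := fun i => ⟨b i, Submodule.subset_span ⟨i, rfl⟩⟩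
  have hspan : Submodule.span A (Set.range b') = ⊤ := by
    apply Submodule.map_injective_of_injective N.injective_subtype
    rw [Submodule.map_span, Submodule.map_top, Submodule.range_subtype]
    congr 1
    rw [← Set.range_comp]
    rfl
  obtain ⟨M, hM, -⟩ := Matrix.isRepresentation.toEnd_exists_mem_ideal A b' hspan f ⊤ (by simp)
  refine ⟨M.1.charpoly, M.1.charpoly_monic, M.1.charpoly_natDegree_eq_dim, ?_⟩
  have hfP : aeval f M.1.charpoly = 0 := by
    rw [← hM, Polynomial.aeval_algHom_apply,
      ← map_zero (Matrix.isRepresentation.toEnd A b' hspan)]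
    congr 1
    ext1
    rw [Polynomial.aeval_subalgebra_coe, Matrix.aeval_self_charpoly, Subalgebra.coe_zero]
  have key : ∀ (p : A[X]) (x : N), ((aeval f p x : N) : B) = aeval u p * (x : B) := by
    intro p
    induction p using Polynomial.induction_on' with
    | add p q hp hq => intro x; simp [hp, hq, add_mul]
    | monomial k a =>
      induction k with
      | zero =>
        intro x
        rw [monomial_zero_left, aeval_C, aeval_C, Module.algebraMap_end_apply]
        simp [Algebra.smul_def]
      | succ k ih =>
        intro x
        have : (monomial (k + 1)) a = (monomial k) a * X := by
          rw [monomial_mul_X]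
        rw [this, map_mul, aeval_X, Module.End.mul_apply, ih (f x), hf, map_mul, aeval_X]
        ring
  have := key M.1.charpoly ⟨1, h1⟩
  rw [hfP] at this
  simpa using this.symm

theorem stmt3 {A B : Type*} [CommRing A] [CommRing B] [Algebra A B] (v u : B) (m n : ℕ)
    (hv : ∃ P : A[X], P.Monic ∧ P.natDegree = m ∧ aeval v P = 0)
    (hu : ∃ P : Polynomial (Algebra.adjoin A ({v} : Set B)), P.Monic ∧ P.natDegree = n ∧
      Polynomial.eval₂ (Algebra.adjoin A ({v} : Set B)).val.toRingHom u P = 0) :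
    ∃ P : A[X], P.Monic ∧ P.natDegree = n * m ∧ aeval u P = 0 := by
  classical
  obtain ⟨P, hPm, hPd, hPv⟩ := hv
  obtain ⟨Q, hQm, hQd, hQu⟩ := hu
  rcases subsingleton_or_nontrivial B with hB | hB
  · rcases subsingleton_or_nontrivial A with hA | hA
    · have hm0 : m = 0 := by
        rw [← hPd, Subsingleton.elim P 0, natDegree_zero]
      exact ⟨0, monic_of_subsingleton _, by simp [hm0], by simp⟩
    · exact ⟨X ^ (n * m), monic_X_pow _, by rw [natDegree_X_pow], Subsingleton.elim _ _⟩
  have : Nontrivial A := by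
    rcases subsingleton_or_nontrivial A with h | h
    · have : (1 : B) = 0 := by
        rw [← map_one (algebraMap A B), ← map_zero (algebraMap A B),
          Subsingleton.elim (1 : A) 0]
      exact absurd (subsingleton_of_zero_eq_one this.symm) (not_subsingleton B)
    · exact h
  have hm : 0 < m := by
    rcases Nat.eq_zero_or_pos m with h | h
    · exfalso
      have : P = 1 := hPm.natDegree_eq_zero.mp (hPd.trans h)
      rw [this, map_one] at hPv
      exact one_ne_zero hPv
    · exact h
  have hn : 0 < n := by
    rcases Nat.eq_zero_or_pos n with h | h
    · exfalso
      have : Q = 1 := hQm.natDegree_eq_zero.mp (hQd.trans h)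
      rw [this, eval₂_one] at hQu
      exact one_ne_zero hQu
    · exact h
  -- the span of powers of v up to m
  set V := Submodule.span A (Set.range fun i : Fin m => v ^ (i : ℕ)) with hV
  have hadj : ∀ c : B, c ∈ Algebra.adjoin A ({v} : Set B) → c ∈ V := by
    intro c hc
    rw [Algebra.adjoin_singleton_eq_range_aeval] at hc
    obtain ⟨p, rfl⟩ := hc
    show aeval v p ∈ V
    have hred : aeval v p = aeval v (p %ₘ P) := by
      conv_lhs => rw [← modByMonic_add_div p P]
      simp [hPv]
    have hdeg : (p %ₘ P).natDegree < m := by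
      have hP1 : P ≠ 1 := by
        intro h
        rw [h, natDegree_one] at hPd
        omega
      have := natDegree_modByMonic_lt p hPm hP1
      omega
    rw [hred, aeval_eq_sum_range' hdeg]
    refine Submodule.sum_mem _ fun k hk => Submodule.smul_mem _ _ ?_
    exact Submodule.subset_span ⟨⟨k, Finset.mem_range.mp hk⟩, rfl⟩
  -- the generating family
  set b : Fin n × Fin m → B := fun p => u ^ (p.1 : ℕ) * v ^ (p.2 : ℕ) with hb
  set N := Submodule.span A (Set.range b) with hNdef
  have hVmul : ∀ k : ℕ, k < n → ∀ x ∈ V, x * u ^ k ∈ N := by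
    intro k hk x hx
    refine Submodule.span_induction (fun y hy => ?_) (by simp) (fun y z _ _ hy hz => ?_)
      (fun a y _ hy => ?_) hx
    · obtain ⟨l, rfl⟩ := hy
      refine Submodule.subset_span ⟨(⟨k, hk⟩, l), ?_⟩
      simp [hb, mul_comm]
    · rw [add_mul]; exact N.add_mem hy hz
    · rw [smul_mul_assoc]; exact N.smul_mem a hy
  have hsum : ∑ k ∈ Finset.range (n + 1), (Q.coeff k : B) * u ^ k = 0 := by
    have h := eval₂_eq_sum_range' (Algebra.adjoin A ({v} : Set B)).val.toRingHom
      (show Q.natDegree < n + 1 by omega) u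
    rw [hQu] at h
    exact h.symm
  have hcn : ((Q.coeff n : B)) = 1 := by
    rw [← hQd, hQm.coeff_natDegree, Subalgebra.coe_one]
  have hun : u ^ n = ∑ k ∈ Finset.range n, -(Q.coeff k : B) * u ^ k := by
    rw [Finset.sum_range_succ, hcn, one_mul] at hsum
    have := eq_neg_of_add_eq_zero_right hsum
    rw [this, ← Finset.sum_neg_distrib]
    exact Finset.sum_congr rfl fun k _ => by ring
  have h1 : (1 : B) ∈ N := by
    refine Submodule.subset_span ⟨(⟨0, hn⟩, ⟨0, hm⟩), ?_⟩
    simp [hb]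
  have hmulu : ∀ p : Fin n × Fin m, u * b p ∈ N := by
    rintro ⟨j, i⟩
    have hbji : u * b (j, i) = u ^ ((j : ℕ) + 1) * v ^ (i : ℕ) := by
      rw [hb]; ring
    rcases Nat.lt_or_ge ((j : ℕ) + 1) n with hj | hj
    · rw [hbji]
      exact Submodule.subset_span ⟨(⟨(j : ℕ) + 1, hj⟩, i), rfl⟩
    · have hjn : (j : ℕ) + 1 = n := le_antisymm j.2 hj
      rw [hbji, hjn, hun, Finset.sum_mul]
      refine Submodule.sum_mem _ fun k hk => ?_
      have : -(Q.coeff k : B) * u ^ k * v ^ (i : ℕ) =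
          (-(Q.coeff k : B) * v ^ (i : ℕ)) * u ^ k := by ring
      rw [this]
      have hmem : -(Q.coeff k : B) * v ^ (i : ℕ) ∈ Algebra.adjoin A ({v} : Set B) :=
        Subalgebra.mul_mem _ (Subalgebra.neg_mem _ (SetLike.coe_mem (Q.coeff k)))
          (Subalgebra.pow_mem _ (Algebra.self_mem_adjoin_singleton A v) _)
      exact hVmul k (Finset.mem_range.mp hk) _ (hadj _ hmem)
  obtain ⟨P', h1', h2', h3'⟩ := aux_charpoly u b h1 hmulu
  exact ⟨P', h1', by simpa using h2', h3'⟩
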